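/- If α, β, γ : ℝ → ℝ are differentiable and T(t) := T(α(t),β(t),γ(t)), then for every t the matrix Ṫ(t)·T(t)ᵀ equals the skew-symmetric matrix whose (2,1) entry is α̇ + β̇ cos γ, whose (3,1) entry is β̇ cos α sin γ − γ̇ sin α, whose (3,2) entry is β̇ sin α sin γ + γ̇ cos α (all functions evaluated at t), whose (1,2), (1,3), (2,3) entries are the negatives of these, and whose diagonal entries are 0. -/

import Mathlib

open Matrix Real

lemma deriv_cos_comp' {f : ℝ → ℝ} {t : ℝ} (hf : DifferentiableAt ℝ f t) :
    deriv (fun s => Real.cos (f s)) t = -Real.sin (f t) * deriv f t :=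
  ((Real.hasDerivAt_cos (f t)).comp t hf.hasDerivAt).deriv

lemma deriv_sin_comp' {f : ℝ → ℝ} {t : ℝ} (hf : DifferentiableAt ℝ f t) :
    deriv (fun s => Real.sin (f s)) t = Real.cos (f t) * deriv f t :=
  ((Real.hasDerivAt_sin (f t)).comp t hf.hasDerivAt).deriv

/-- The Euler-angle matrix `T(α,β,γ)`: its first column is
`(cos α cos β − sin α sin β cos γ, sin α cos β + cos α sin β cos γ, sin β sin γ)`,
its second column is
`(−cos α sin β − sin α cos β cos γ, −sin α sin β + cos α cos β cos γ, cos β sin γ)`,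
and its third column is `(sin α sin γ, −cos α sin γ, cos γ)`. -/
noncomputable def eulerT (α β γ : ℝ) : Matrix (Fin 3) (Fin 3) ℝ :=
  !![Real.cos α * Real.cos β - Real.sin α * Real.sin β * Real.cos γ,
     -(Real.cos α * Real.sin β) - Real.sin α * Real.cos β * Real.cos γ,
     Real.sin α * Real.sin γ;
     Real.sin α * Real.cos β + Real.cos α * Real.sin β * Real.cos γ,
     -(Real.sin α * Real.sin β) + Real.cos α * Real.cos β * Real.cos γ,
     -(Real.cos α * Real.sin γ);
     Real.sin β * Real.sin γ,
     Real.cos β * Real.sin γ,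
     Real.cos γ]

set_option maxHeartbeats 1000000 in
theorem eulerT_deriv_mul_transpose (α β γ : ℝ → ℝ)
    (hα : Differentiable ℝ α) (hβ : Differentiable ℝ β) (hγ : Differentiable ℝ γ) (t : ℝ) :
    (Matrix.of fun i j => deriv (fun s => eulerT (α s) (β s) (γ s) i j) t) *
        (eulerT (α t) (β t) (γ t))ᵀ =
      !![0,
         -(deriv α t + deriv β t * Real.cos (γ t)),
         -(deriv β t * Real.cos (α t) * Real.sin (γ t) - deriv γ t * Real.sin (α t));
         deriv α t + deriv β t * Real.cos (γ t),
         0,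
         -(deriv β t * Real.sin (α t) * Real.sin (γ t) + deriv γ t * Real.cos (α t));
         deriv β t * Real.cos (α t) * Real.sin (γ t) - deriv γ t * Real.sin (α t),
         deriv β t * Real.sin (α t) * Real.sin (γ t) + deriv γ t * Real.cos (α t),
         0] := by
  have pa := Real.sin_sq_add_cos_sq (α t)
  have pb := Real.sin_sq_add_cos_sq (β t)
  have pc := Real.sin_sq_add_cos_sq (γ t)
  ext i j
  fin_cases i <;> fin_cases j <;>
    (simp [eulerT, Matrix.mul_apply, Fin.sum_univ_three, Matrix.transpose_apply, Matrix.vecHead, Matrix.vecTail];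
     simp (disch := fun_prop) only [deriv_fun_sub, deriv_fun_add, deriv_fun_mul, deriv_cos_comp',
       deriv_sin_comp', deriv.fun_neg])
  · linear_combination ((Real.sin (γ t)) * (Real.cos (γ t)) * (deriv γ t) + (-1) * (Real.cos (β t)) * (Real.cos (β t)) * (Real.sin (γ t)) * (Real.cos (γ t)) * (deriv γ t) + (-1) * (Real.sin (β t)) * (Real.sin (β t)) * (Real.sin (γ t)) * (Real.cos (γ t)) * (deriv γ t)) * pa + ((-1) * (Real.sin (γ t)) * (Real.cos (γ t)) * (deriv γ t) + (Real.cos (α t)) * (Real.cos (α t)) * (Real.sin (γ t)) * (Real.cos (γ t)) * (deriv γ t) + (-1) * (Real.sin (α t)) * (Real.cos (α t)) * (deriv α t) + (Real.sin (α t)) * (Real.cos (α t)) * (Real.cos (γ t)) * (Real.cos (γ t)) * (deriv α t)) * pb + ((Real.sin (α t)) * (Real.cos (α t)) * (deriv α t)) * pc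

  · linear_combination ((-1) * (Real.cos (β t)) * (Real.cos (β t)) * (deriv α t) + (-1) * (Real.cos (β t)) * (Real.cos (β t)) * (Real.cos (γ t)) * (deriv β t) + (-1) * (Real.sin (β t)) * (Real.sin (β t)) * (deriv α t) + (-1) * (Real.sin (β t)) * (Real.sin (β t)) * (Real.cos (γ t)) * (deriv β t)) * pa + ((-1) * (deriv α t) + (-1) * (Real.cos (γ t)) * (deriv β t) + (Real.cos (α t)) * (Real.cos (α t)) * (deriv α t) + (-1) * (Real.cos (α t)) * (Real.cos (α t)) * (Real.cos (γ t)) * (Real.cos (γ t)) * (deriv α t) + (Real.sin (α t)) * (Real.cos (α t)) * (Real.sin (γ t)) * (Real.cos (γ t)) * (deriv γ t)) * pb + ((-1) * (Real.cos (α t)) * (Real.cos (α t)) * (deriv α t)) * pc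

  · linear_combination ((-1) * (Real.cos (α t)) * (Real.sin (γ t)) * (deriv β t) + (-1) * (Real.cos (α t)) * (Real.sin (γ t)) * (Real.cos (γ t)) * (deriv α t) + (Real.sin (α t)) * (Real.sin (γ t)) * (Real.sin (γ t)) * (deriv γ t)) * pb + ((Real.sin (α t)) * (deriv γ t)) * pc

  · linear_combination ((Real.sin (γ t)) * (Real.sin (γ t)) * (deriv α t) + (Real.cos (β t)) * (Real.cos (β t)) * (Real.cos (γ t)) * (deriv β t) + (Real.cos (β t)) * (Real.cos (β t)) * (Real.cos (γ t)) * (Real.cos (γ t)) * (deriv α t) + (Real.sin (β t)) * (Real.sin (β t)) * (Real.cos (γ t)) * (deriv β t) + (Real.sin (β t)) * (Real.sin (β t)) * (Real.cos (γ t)) * (Real.cos (γ t)) * (deriv α t)) * pa + ((Real.cos (γ t)) * (deriv β t) + (Real.cos (γ t)) * (Real.cos (γ t)) * (deriv α t) + (Real.cos (α t)) * (Real.cos (α t)) * (deriv α t) + (-1) * (Real.cos (α t)) * (Real.cos (α t)) * (Real.cos (γ t)) * (Real.cos (γ t)) * (deriv α t) + (Real.sin (α t)) * (Real.cos (α t))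 * (Real.sin (γ t)) * (Real.cos (γ t)) * (deriv γ t)) * pb + ((deriv α t) + (-1) * (Real.cos (α t)) * (Real.cos (α t)) * (deriv α t)) * pc

  · linear_combination ((-1) * (Real.cos (α t)) * (Real.cos (α t)) * (Real.sin (γ t)) * (Real.cos (γ t)) * (deriv γ t) + (Real.sin (α t)) * (Real.cos (α t)) * (deriv α t) + (-1) * (Real.sin (α t)) * (Real.cos (α t)) * (Real.cos (γ t)) * (Real.cos (γ t)) * (deriv α t)) * pb + ((-1) * (Real.sin (α t)) * (Real.cos (α t)) * (deriv α t)) * pc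

  · linear_combination ((-1) * (Real.cos (α t)) * (Real.sin (γ t)) * (Real.sin (γ t)) * (deriv γ t) + (-1) * (Real.sin (α t)) * (Real.sin (γ t)) * (deriv β t) + (-1) * (Real.sin (α t)) * (Real.sin (γ t)) * (Real.cos (γ t)) * (deriv α t)) * pb + ((-1) * (Real.cos (α t)) * (deriv γ t)) * pc

  · linear_combination ((Real.cos (α t)) * (Real.sin (γ t)) * (deriv β t) + (-1) * (Real.sin (α t)) * (Real.cos (γ t)) * (Real.cos (γ t)) * (deriv γ t)) * pb + ((-1) * (Real.sin (α t)) * (deriv γ t)) * pc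

  · linear_combination ((Real.cos (α t)) * (Real.cos (γ t)) * (Real.cos (γ t)) * (deriv γ t) + (Real.sin (α t)) * (Real.sin (γ t)) * (deriv β t)) * pb + ((Real.cos (α t)) * (deriv γ t)) * pc

  · linear_combination ((Real.sin (γ t)) * (Real.cos (γ t)) * (deriv γ t)) * pb
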